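/- arXiv:1812.04733 — 6 statements merged into one kernel-verified Lean document; each statement's English description precedes it below -/
import Mathlib

section
/- Let C be a conjugation on a complex Hilbert space H, let T be a C-symmetric bounded operator, and let p(z, w) be a polynomial in two noncommuting variables. Then C · p(T*, T) · C = p̃(T, T*), where p̃ is obtained from p by conjugating each coefficient. Consequently ‖p(T*, T)‖ = ‖p̃(T, T*)‖, i.e., every complex symmetric operator is g-normal. -/
noncomputable section

/-- A conjugation on a complex inner product space: a conjugate-linear involution
satisfying `⟪Cx, Cy⟫ = ⟪y, x⟫`. -/
def IsConjugation {H : Type*} [NormedAddCommGroup H] [InnerProductSpace ℂ H]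
    (C : H → H) : Prop :=
  (∀ x y : H, C (x + y) = C x + C y) ∧
  (∀ (a : ℂ) (x : H), C (a • x) = (starRingEnd ℂ) a • C x) ∧
  (∀ x : H, C (C x) = x) ∧
  (∀ x y : H, (inner ℂ (C x) (C y) : ℂ) = inner ℂ y x)


/-- The product of the word `w` in the two noncommuting letters `z` (↦ `A`, encoded `true`)
and `w` (↦ `B`, encoded `false`). -/
def wordProd {H : Type*} [NormedAddCommGroup H] [InnerProductSpace ℂ H]
    (A B : H →L[ℂ] H) : List Bool → (H →L[ℂ] H)
  | [] => 1
  | b :: rest => (if b then A else B) * wordProd A B rest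

lemma conj_norm {H : Type*} [NormedAddCommGroup H] [InnerProductSpace ℂ H]
    (C : H → H) (hC : IsConjugation C) (x : H) : ‖C x‖ = ‖x‖ := by
  have h := hC.2.2.2 x x
  have h1 : ‖C x‖ ^ 2 = ‖x‖ ^ 2 := by
    rw [← @inner_self_eq_norm_sq ℂ, ← @inner_self_eq_norm_sq ℂ, h]
  nlinarith [norm_nonneg (C x), norm_nonneg x]

lemma conj_norm_eq {H : Type*} [NormedAddCommGroup H] [InnerProductSpace ℂ H]
    (C : H → H) (hC : IsConjugation C) (P Q : H →L[ℂ] H)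
    (h : ∀ x, Q x = C (P (C x))) : ‖P‖ = ‖Q‖ := by
  have key : ∀ (P Q : H →L[ℂ] H), (∀ x, Q x = C (P (C x))) → ‖Q‖ ≤ ‖P‖ := by
    intro P Q h
    refine ContinuousLinearMap.opNorm_le_bound _ (norm_nonneg _) (fun x => ?_)
    rw [h x, conj_norm C hC]
    calc ‖P (C x)‖ ≤ ‖P‖ * ‖C x‖ := P.le_opNorm _
    _ = ‖P‖ * ‖x‖ := by rw [conj_norm C hC]
  refine le_antisymm (key Q P fun x => ?_) (key P Q h)
  rw [h (C x), hC.2.2.1, hC.2.2.1]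

theorem stmt_3 {H : Type*} [NormedAddCommGroup H] [InnerProductSpace ℂ H] [CompleteSpace H]
    (C : H → H) (hC : IsConjugation C) (T : H →L[ℂ] H)
    (hT : ∀ x : H, C (T (C x)) = ContinuousLinearMap.adjoint T x)
    (c : List Bool →₀ ℂ) :
    (∀ x : H,
      C ((∑ w ∈ c.support, c w • wordProd (ContinuousLinearMap.adjoint T) T w) (C x)) =
        (∑ w ∈ c.support, (starRingEnd ℂ) (c w) • wordProd T (ContinuousLinearMap.adjoint T) w) x) ∧
    ‖∑ w ∈ c.support, c w • wordProd (ContinuousLinearMap.adjoint T) T w‖ =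
      ‖∑ w ∈ c.support, (starRingEnd ℂ) (c w) • wordProd T (ContinuousLinearMap.adjoint T) w‖ := by
  obtain ⟨hadd, hsmul, hinv, hinner⟩ := hC
  have hT' : ∀ x : H, C (ContinuousLinearMap.adjoint T (C x)) = T x := by
    intro x
    have := hT (C x)
    rw [hinv] at this
    rw [← this, hinv]
  -- key word lemma
  have hword : ∀ (w : List Bool) (x : H),
      C (wordProd (ContinuousLinearMap.adjoint T) T w (C x)) =
        wordProd T (ContinuousLinearMap.adjoint T) w x := by
    intro w
    induction w with
    | nil => intro x; simp [wordProd, hinv]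
    | cons b rest ih =>
      intro x
      have hr : wordProd (ContinuousLinearMap.adjoint T) T rest (C x) =
          C (wordProd T (ContinuousLinearMap.adjoint T) rest x) := by
        rw [← ih x, hinv]
      cases b with
      | true =>
        simp only [wordProd, if_pos rfl, ContinuousLinearMap.mul_apply, hr]
        exact hT' _
      | false =>
        simp only [wordProd, if_neg (Bool.false_ne_true), ContinuousLinearMap.mul_apply, hr]
        exact hT _
  have hmain : ∀ x : H,
      C ((∑ w ∈ c.support, c w • wordProd (ContinuousLinearMap.adjoint T) T w) (C x)) =
        (∑ w ∈ c.support, (starRingEnd ℂ) (c w) • wordProd T (ContinuousLinearMap.adjoint T) w) x := by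
    intro x
    rw [ContinuousLinearMap.sum_apply, ContinuousLinearMap.sum_apply]
    have hC0 : C 0 = 0 := by
      have h0 := hadd 0 0
      simp only [add_zero] at h0
      exact (left_eq_add.mp h0)
    have hCadd : ∀ (s : Finset (List Bool)) (f : List Bool → H),
        C (∑ w ∈ s, f w) = ∑ w ∈ s, C (f w) := by
      intro s f
      induction s using Finset.induction with
      | empty => simpa using hC0
      | @insert a s ha ih =>
        rw [Finset.sum_insert ha, Finset.sum_insert ha, hadd, ih]
    rw [hCadd]
    refine Finset.sum_congr rfl (fun w _ => ?_)
    rw [ContinuousLinearMap.smul_apply, ContinuousLinearMap.smul_apply, hsmul, hword]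
  refine ⟨hmain, ?_⟩
  exact conj_norm_eq C ⟨hadd, hsmul, hinv, hinner⟩ _ _ (fun x => (hmain x).symm)
end
end

section
/- Let T be a 2×2 upper-triangular block operator T = [[X, E], [0, CX*C]] on H ⊕ H, where X is a bounded operator on H, C is a conjugation on H, and E is a bounded operator on H with CEC = E*. Then T is complex symmetric with respect to the conjugation J on H ⊕ H given by J(x, y) = (Cy, Cx). -/
noncomputable section

theorem stmt_15 {H : Type*} [NormedAddCommGroup H] [InnerProductSpace ℂ H] [CompleteSpace H]
    (C : H → H) (hC : IsConjugation C)
    (X E : H →L[ℂ] H)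
    (hE : ∀ x : H, C (E (C x)) = ContinuousLinearMap.adjoint E x)
    (T : WithLp 2 (H × H) →L[ℂ] WithLp 2 (H × H))
    (hT : ∀ x y : H,
      T ((WithLp.equiv 2 (H × H)).symm (x, y)) =
        (WithLp.equiv 2 (H × H)).symm
          (X x + E y, C (ContinuousLinearMap.adjoint X (C y))))
    (J : WithLp 2 (H × H) → WithLp 2 (H × H))
    (hJ : ∀ x y : H,
      J ((WithLp.equiv 2 (H × H)).symm (x, y)) = (WithLp.equiv 2 (H × H)).symm (C y, C x)) :
    IsConjugation J ∧ ∀ u, J (T (J u)) = ContinuousLinearMap.adjoint T u := by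
  obtain ⟨hCadd, hCsmul, hCinv, hCinner⟩ := hC
  have hJ' : ∀ u : WithLp 2 (H × H),
      J u = (WithLp.equiv 2 (H × H)).symm (C u.snd, C u.fst) := fun u => hJ u.fst u.snd
  have hT' : ∀ u : WithLp 2 (H × H),
      T u = (WithLp.equiv 2 (H × H)).symm
        (X u.fst + E u.snd, C (ContinuousLinearMap.adjoint X (C u.snd))) := fun u => hT u.fst u.snd
  -- a useful consequence: ⟨C a, b⟩ = ⟨C b, a⟩
  have hCC : ∀ a b : H, (inner ℂ (C a) b : ℂ) = inner ℂ (C b) a := by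
    intro a b
    have := hCinner a (C b)
    rwa [hCinv] at this
  constructor
  · refine ⟨?_, ?_, ?_, ?_⟩
    · intro x y
      rw [hJ' (x + y), hJ' x, hJ' y]
      refine congrArg _ (Prod.ext ?_ ?_)
      · show C ((x + y).snd) = C x.snd + C y.snd
        rw [show (x + y).snd = x.snd + y.snd from rfl, hCadd]
      · show C ((x + y).fst) = C x.fst + C y.fst
        rw [show (x + y).fst = x.fst + y.fst from rfl, hCadd]
    · intro a x
      rw [hJ' (a • x), hJ' x]
      refine congrArg _ (Prod.ext ?_ ?_)
      · show C ((a • x).snd) = (starRingEnd ℂ) a • C x.snd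
        rw [show (a • x).snd = a • x.snd from rfl, hCsmul]
      · show C ((a • x).fst) = (starRingEnd ℂ) a • C x.fst
        rw [show (a • x).fst = a • x.fst from rfl, hCsmul]
    · intro x
      rw [hJ' x, hJ' _]
      refine congrArg _ (Prod.ext ?_ ?_)
      · exact hCinv x.fst
      · exact hCinv x.snd
    · intro x y
      rw [hJ' x, hJ' y, WithLp.prod_inner_apply, WithLp.prod_inner_apply]
      simp only [WithLp.equiv_symm_apply, WithLp.ofLp_toLp, WithLp.ofLp_fst, WithLp.ofLp_snd]
      rw [hCinner, hCinner]
      ring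
  · intro u
    apply ext_inner_right ℂ
    intro v
    rw [ContinuousLinearMap.adjoint_inner_left]
    rw [hJ' u, hT (C u.snd) (C u.fst),
      hJ (X (C u.snd) + E (C u.fst)) (C (ContinuousLinearMap.adjoint X (C (C u.fst)))), hT' v]
    rw [WithLp.prod_inner_apply, WithLp.prod_inner_apply]
    simp only [WithLp.equiv_symm_apply, WithLp.ofLp_toLp, WithLp.ofLp_fst, WithLp.ofLp_snd]
    rw [hCinv, hCinv, hCadd, inner_add_left, inner_add_right]
    have e0 : (inner ℂ (ContinuousLinearMap.adjoint X u.fst) v.fst : ℂ) = inner ℂ u.fst (X v.fst) :=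
      ContinuousLinearMap.adjoint_inner_left X v.fst u.fst
    have e1 : (inner ℂ (C (E (C u.fst))) v.snd : ℂ) = inner ℂ u.fst (E v.snd) := by
      rw [hCC]
      have : (inner ℂ (C v.snd) (E (C u.fst)) : ℂ)
          = inner ℂ (ContinuousLinearMap.adjoint E (C v.snd)) (C u.fst) :=
        (ContinuousLinearMap.adjoint_inner_left E (C u.fst) (C v.snd)).symm
      rw [this, ← hE (C v.snd), hCinv, hCinner]
    have e2 : (inner ℂ (C (X (C u.snd))) v.snd : ℂ)
        = inner ℂ u.snd (C (ContinuousLinearMap.adjoint X (C v.snd))) := by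
      rw [hCC]
      rw [show (inner ℂ (C v.snd) (X (C u.snd)) : ℂ)
          = inner ℂ (ContinuousLinearMap.adjoint X (C v.snd)) (C u.snd) from
        (ContinuousLinearMap.adjoint_inner_left X (C u.snd) (C v.snd)).symm]
      rw [← inner_conj_symm, ← hCC, inner_conj_symm]
    rw [e0, e1, e2]
    ring
end
end

section
/- Let T = [[X, E], [0, Y]] be an upper-triangular block operator on H ⊕ H where both X and Y are irreducible, X* has no eigenvalues, Y has no eigenvalues, E is injective, and the only bounded operator Z with YZ = ZX is Z = 0. Then T is irreducible: any orthogonal projection on H ⊕ H commuting with T is 0 or I. -/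
noncomputable section

theorem stmt_16 {H : Type*} [NormedAddCommGroup H] [InnerProductSpace ℂ H] [CompleteSpace H]
    (X Y E : H →L[ℂ] H)
    (hXirr : ∀ P : H →L[ℂ] H, IsIdempotentElem P → IsSelfAdjoint P →
      P * X = X * P → P = 0 ∨ P = 1)
    (hYirr : ∀ P : H →L[ℂ] H, IsIdempotentElem P → IsSelfAdjoint P →
      P * Y = Y * P → P = 0 ∨ P = 1)
    (hXadj : ∀ (lam : ℂ) (x : H), ContinuousLinearMap.adjoint X x = lam • x → x = 0)
    (hYeig : ∀ (lam : ℂ) (x : H), Y x = lam • x → x = 0)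
    (hEinj : Function.Injective ⇑E)
    (hros : ∀ Z : H →L[ℂ] H, Y * Z = Z * X → Z = 0)
    (T : WithLp 2 (H × H) →L[ℂ] WithLp 2 (H × H))
    (hT : ∀ x y : H,
      T ((WithLp.equiv 2 (H × H)).symm (x, y)) =
        (WithLp.equiv 2 (H × H)).symm (X x + E y, Y y)) :
    ∀ P : WithLp 2 (H × H) →L[ℂ] WithLp 2 (H × H),
      IsIdempotentElem P → IsSelfAdjoint P → P * T = T * P → P = 0 ∨ P = 1 := by
  intro P hP hPsa hPT
  set e := (WithLp.equiv 2 (H × H)).symm with he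
  set L : WithLp 2 (H × H) ≃L[ℂ] H × H := WithLp.prodContinuousLinearEquiv 2 ℂ H H with hL
  set P11 : H →L[ℂ] H := (ContinuousLinearMap.fst ℂ H H) ∘L L.toContinuousLinearMap ∘L P ∘L
      L.symm.toContinuousLinearMap ∘L (ContinuousLinearMap.inl ℂ H H) with hP11
  set P12 : H →L[ℂ] H := (ContinuousLinearMap.fst ℂ H H) ∘L L.toContinuousLinearMap ∘L P ∘L
      L.symm.toContinuousLinearMap ∘L (ContinuousLinearMap.inr ℂ H H) with hP12
  set P21 : H →L[ℂ] H := (ContinuousLinearMap.snd ℂ H H) ∘L L.toContinuousLinearMap ∘L P ∘L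
      L.symm.toContinuousLinearMap ∘L (ContinuousLinearMap.inl ℂ H H) with hP21
  set P22 : H →L[ℂ] H := (ContinuousLinearMap.snd ℂ H H) ∘L L.toContinuousLinearMap ∘L P ∘L
      L.symm.toContinuousLinearMap ∘L (ContinuousLinearMap.inr ℂ H H) with hP22
  have hPapp : ∀ x y : H, P (e (x, y)) = e (P11 x + P12 y, P21 x + P22 y) := by
    intro x y
    have hxy : e (x, y) = e (x, 0) + e (0, y) := by
      rw [he, WithLp.equiv_symm_apply, ← WithLp.toLp_add, Prod.mk_add_mk, add_zero, zero_add]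
    rw [hxy, map_add]
    have h1 : P (e (x, 0)) = e (P11 x, P21 x) := rfl
    have h2 : P (e (0, y)) = e (P12 y, P22 y) := rfl
    rw [h1, h2, he, WithLp.equiv_symm_apply, ← WithLp.toLp_add, Prod.mk_add_mk]
  have hPTapp : ∀ u, P (T u) = T (P u) := fun u => by
    simpa [ContinuousLinearMap.mul_apply] using congrFun (congrArg DFunLike.coe hPT) u
  have key : ∀ x y : H,
      (P11 (X x + E y) + P12 (Y y) = X (P11 x + P12 y) + E (P21 x + P22 y)) ∧
      (P21 (X x + E y) + P22 (Y y) = Y (P21 x + P22 y)) := by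
    intro x y
    have h1 := hPTapp (e (x, y))
    rw [hT, hPapp, hPapp, hT] at h1
    have h2 := (WithLp.equiv 2 (H × H)).symm.injective h1
    exact ⟨congrArg Prod.fst h2, congrArg Prod.snd h2⟩
  have hP21zero : P21 = 0 := by
    refine hros P21 ?_
    ext x
    have h := (key x 0).2
    simp only [map_zero, add_zero] at h
    simp [ContinuousLinearMap.mul_apply, ← h]
  have hsym := ContinuousLinearMap.isSelfAdjoint_iff_isSymmetric.mp hPsa
  have hP12zero : P12 = 0 := by
    ext y
    have h := hsym (e ((P12 y), 0)) (e (0, y))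
    simp only [ContinuousLinearMap.coe_coe] at h
    rw [hPapp, hPapp] at h
    simp only [he, WithLp.prod_inner_apply, WithLp.equiv_symm_apply, WithLp.ofLp_toLp,
      hP21zero, ContinuousLinearMap.zero_apply, map_zero, add_zero, zero_add,
      inner_zero_left, inner_zero_right] at h
    have h0 : (inner ℂ (P12 y) (P12 y) : ℂ) = 0 := by simpa using h.symm
    simpa using inner_self_eq_zero.mp h0
  have hP11idem : IsIdempotentElem P11 := by
    ext x
    have h := congrFun (congrArg DFunLike.coe hP) (e (x, 0))
    rw [ContinuousLinearMap.mul_apply, hPapp, hPapp, hP12zero, hP21zero] at h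
    have h2 := (WithLp.equiv 2 (H × H)).symm.injective h
    simpa [ContinuousLinearMap.mul_apply] using congrArg Prod.fst h2
  have hP22idem : IsIdempotentElem P22 := by
    ext y
    have h := congrFun (congrArg DFunLike.coe hP) (e (0, y))
    rw [ContinuousLinearMap.mul_apply, hPapp, hPapp, hP12zero, hP21zero] at h
    have h2 := (WithLp.equiv 2 (H × H)).symm.injective h
    simpa [ContinuousLinearMap.mul_apply] using congrArg Prod.snd h2
  have hP11sa : IsSelfAdjoint P11 := by
    rw [ContinuousLinearMap.isSelfAdjoint_iff_isSymmetric]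
    intro x x'
    have h := hsym (e (x, 0)) (e (x', 0))
    simp only [ContinuousLinearMap.coe_coe] at h
    rw [hPapp, hPapp] at h
    simpa [he, WithLp.prod_inner_apply, WithLp.equiv_symm_apply, WithLp.ofLp_toLp,
      hP12zero, hP21zero] using h
  have hP22sa : IsSelfAdjoint P22 := by
    rw [ContinuousLinearMap.isSelfAdjoint_iff_isSymmetric]
    intro y y'
    have h := hsym (e (0, y)) (e (0, y'))
    simp only [ContinuousLinearMap.coe_coe] at h
    rw [hPapp, hPapp] at h
    simpa [he, WithLp.prod_inner_apply, WithLp.equiv_symm_apply, WithLp.ofLp_toLp,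
      hP12zero, hP21zero] using h
  have hP11X : P11 * X = X * P11 := by
    ext x
    have h := (key x 0).1
    simp only [map_zero, add_zero, hP12zero, hP21zero, ContinuousLinearMap.zero_apply] at h
    simpa [ContinuousLinearMap.mul_apply] using h
  have hP22Y : P22 * Y = Y * P22 := by
    ext y
    have h := (key 0 y).2
    simp only [map_zero, zero_add, hP21zero, ContinuousLinearMap.zero_apply] at h
    simpa [ContinuousLinearMap.mul_apply] using h
  have hcross : ∀ y : H, P11 (E y) = E (P22 y) := by
    intro y
    have h := (key 0 y).1
    simp only [map_zero, zero_add, hP12zero, hP21zero, ContinuousLinearMap.zero_apply,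
      add_zero] at h
    exact h
  rcases hXirr P11 hP11idem hP11sa hP11X with h11 | h11 <;>
    rcases hYirr P22 hP22idem hP22sa hP22Y with h22 | h22
  · left
    ext u
    show P (e (u.ofLp.1, u.ofLp.2)) = 0
    rw [hPapp]
    simp [h11, h22, hP12zero, hP21zero, he]
  · -- P11 = 0, P22 = 1 : degenerate
    have hdeg : ∀ z : H, z = 0 := by
      intro z
      apply hEinj
      have h := hcross z
      rw [h11, h22] at h
      simp only [ContinuousLinearMap.zero_apply, ContinuousLinearMap.one_apply] at h
      simp [← h]
    left
    ext u
    show P (e (u.ofLp.1, u.ofLp.2)) = 0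
    rw [hPapp]
    simp [h11, h22, hP12zero, hP21zero, hdeg u.fst, hdeg u.snd, he]
  · -- P11 = 1, P22 = 0 : degenerate
    have hdeg : ∀ z : H, z = 0 := by
      intro z
      apply hEinj
      have h := hcross z
      rw [h11, h22] at h
      simp only [ContinuousLinearMap.zero_apply, ContinuousLinearMap.one_apply,
        map_zero] at h
      simp [h]
    left
    ext u
    show P (e (u.ofLp.1, u.ofLp.2)) = 0
    rw [hPapp]
    simp [h11, h22, hP12zero, hP21zero, hdeg u.fst, hdeg u.snd, he]
  · right
    ext u
    show P (e (u.ofLp.1, u.ofLp.2)) = (1 : WithLp 2 (H × H) →L[ℂ] WithLp 2 (H × H)) (e (u.ofLp.1, u.ofLp.2))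
    rw [hPapp]
    simp [h11, h22, hP12zero, hP21zero, he]
end
end

section
/- Let T be a bounded operator on a complex Hilbert space and suppose T is C-symmetric for some conjugation C. If λ ∉ σ_lre(T) (i.e., T − λ is semi-Fredholm), then T − λ is Fredholm of index 0. Consequently σ_e(T) = σ_lre(T) for every complex symmetric operator T. -/
noncomputable section

section AuxLemmas

variable {H : Type*} [NormedAddCommGroup H] [InnerProductSpace ℂ H] [CompleteSpace H]

/-- The main kernel comparison: if `C (A (C x)) = A† x` for all `x`, then `C` yields an
`ℝ`-linear equivalence between `ker A` and `ker A†`, so the kernels have equal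
`ℂ`-dimensions and finite-dimensionality transfers between them. -/
lemma ker_equiv_aux (C : H → H)
    (hadd : ∀ x y : H, C (x + y) = C x + C y)
    (hsmul : ∀ (a : ℂ) (x : H), C (a • x) = (starRingEnd ℂ) a • C x)
    (hinv : ∀ x : H, C (C x) = x)
    (A : H →L[ℂ] H)
    (hA : ∀ x : H, C (A (C x)) = ContinuousLinearMap.adjoint A x) :
    (FiniteDimensional ℂ (LinearMap.ker (A : H →ₗ[ℂ] H)) ↔
      FiniteDimensional ℂ (LinearMap.ker ((ContinuousLinearMap.adjoint A : H →L[ℂ] H) : H →ₗ[ℂ] H))) ∧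
    Module.finrank ℂ (LinearMap.ker (A : H →ₗ[ℂ] H)) =
      Module.finrank ℂ (LinearMap.ker ((ContinuousLinearMap.adjoint A : H →L[ℂ] H) : H →ₗ[ℂ] H)) := by
  have hC0 : C 0 = 0 := by
    have h := hsmul 0 0
    simpa using h
  -- x ∈ ker A → C x ∈ ker A†
  have h1 : ∀ x : H, A x = 0 → ContinuousLinearMap.adjoint A (C x) = 0 := by
    intro x hx
    rw [← hA (C x), hinv x, hx, hC0]
  -- x ∈ ker A† → C x ∈ ker A
  have h2 : ∀ x : H, ContinuousLinearMap.adjoint A x = 0 →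
      A (C x) = 0 := by
    intro x hx
    have : C (A (C x)) = 0 := by rw [hA x, hx]
    calc A (C x) = C (C (A (C x))) := (hinv _).symm
    _ = C 0 := by rw [this]
    _ = 0 := hC0
  -- the ℝ-linear equivalence between the kernels
  let e : (LinearMap.ker (A : H →ₗ[ℂ] H) : Submodule ℂ H) ≃ₗ[ℝ]
      (LinearMap.ker ((ContinuousLinearMap.adjoint A : H →L[ℂ] H) : H →ₗ[ℂ] H) : Submodule ℂ H) :=
    { toFun := fun x => ⟨C x.1, by
        have hx : A x.1 = 0 := x.2
        exact LinearMap.mem_ker.mpr (h1 x.1 hx)⟩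
      invFun := fun y => ⟨C y.1, by
        have hy : ContinuousLinearMap.adjoint A y.1 = 0 := y.2
        exact LinearMap.mem_ker.mpr (h2 y.1 hy)⟩
      map_add' := fun x y => Subtype.ext (hadd x.1 y.1)
      map_smul' := fun r x => by
        apply Subtype.ext
        show C ((r : ℝ) • x.1) = (r : ℝ) • C x.1
        have : (r : ℝ) • x.1 = ((r : ℂ) • x.1 : H) := by
          simp [Complex.coe_smul]
        rw [this, hsmul]
        simp [Complex.coe_smul]
      left_inv := fun x => Subtype.ext (hinv x.1)
      right_inv := fun y => Subtype.ext (hinv y.1) }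
  -- transfer of finite-dimensionality
  have fwd : FiniteDimensional ℂ (LinearMap.ker (A : H →ₗ[ℂ] H)) →
      FiniteDimensional ℂ (LinearMap.ker ((ContinuousLinearMap.adjoint A : H →L[ℂ] H) : H →ₗ[ℂ] H)) := by
    intro h
    have : FiniteDimensional ℝ (LinearMap.ker (A : H →ₗ[ℂ] H)) := FiniteDimensional.trans ℝ ℂ _
    have : FiniteDimensional ℝ (LinearMap.ker ((ContinuousLinearMap.adjoint A : H →L[ℂ] H) : H →ₗ[ℂ] H)) :=
      e.finiteDimensional
    exact Module.Finite.of_restrictScalars_finite ℝ ℂ _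
  have bwd : FiniteDimensional ℂ (LinearMap.ker ((ContinuousLinearMap.adjoint A : H →L[ℂ] H) : H →ₗ[ℂ] H)) →
      FiniteDimensional ℂ (LinearMap.ker (A : H →ₗ[ℂ] H)) := by
    intro h
    have : FiniteDimensional ℝ (LinearMap.ker ((ContinuousLinearMap.adjoint A : H →L[ℂ] H) : H →ₗ[ℂ] H)) :=
      FiniteDimensional.trans ℝ ℂ _
    have : FiniteDimensional ℝ (LinearMap.ker (A : H →ₗ[ℂ] H)) := e.symm.finiteDimensional
    exact Module.Finite.of_restrictScalars_finite ℝ ℂ _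
  refine ⟨⟨fwd, bwd⟩, ?_⟩
  -- equality of complex dimensions
  have hr : Module.finrank ℝ (LinearMap.ker (A : H →ₗ[ℂ] H)) =
      Module.finrank ℝ (LinearMap.ker ((ContinuousLinearMap.adjoint A : H →L[ℂ] H) : H →ₗ[ℂ] H)) := e.finrank_eq
  have k1 : Module.finrank ℝ ℂ * Module.finrank ℂ (LinearMap.ker (A : H →ₗ[ℂ] H)) =
      Module.finrank ℝ (LinearMap.ker (A : H →ₗ[ℂ] H)) := Module.finrank_mul_finrank ℝ ℂ _
  have k2 : Module.finrank ℝ ℂ * Module.finrank ℂ (LinearMap.ker ((ContinuousLinearMap.adjoint A : H →L[ℂ] H) : H →ₗ[ℂ] H)) =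
      Module.finrank ℝ (LinearMap.ker ((ContinuousLinearMap.adjoint A : H →L[ℂ] H) : H →ₗ[ℂ] H)) :=
    Module.finrank_mul_finrank ℝ ℂ _
  rw [Complex.finrank_real_complex] at k1 k2
  omega

end AuxLemmas

theorem stmt_17 {H : Type*} [NormedAddCommGroup H] [InnerProductSpace ℂ H] [CompleteSpace H]
    (C : H → H) (hC : IsConjugation C) (T : H →L[ℂ] H)
    (hT : ∀ x : H, C (T (C x)) = ContinuousLinearMap.adjoint T x) :
    (∀ lam : ℂ,
      (IsClosed (Set.range (T - lam • (1 : H →L[ℂ] H))) ∧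
        (FiniteDimensional ℂ (LinearMap.ker ((T - lam • (1 : H →L[ℂ] H) : H →L[ℂ] H) : H →ₗ[ℂ] H)) ∨
          FiniteDimensional ℂ (LinearMap.ker ((ContinuousLinearMap.adjoint (T - lam • (1 : H →L[ℂ] H)) : H →L[ℂ] H) : H →ₗ[ℂ] H)))) →
      FiniteDimensional ℂ (LinearMap.ker ((T - lam • (1 : H →L[ℂ] H) : H →L[ℂ] H) : H →ₗ[ℂ] H)) ∧
      FiniteDimensional ℂ (LinearMap.ker ((ContinuousLinearMap.adjoint (T - lam • (1 : H →L[ℂ] H)) : H →L[ℂ] H) : H →ₗ[ℂ] H)) ∧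
      Module.finrank ℂ (LinearMap.ker ((T - lam • (1 : H →L[ℂ] H) : H →L[ℂ] H) : H →ₗ[ℂ] H)) =
        Module.finrank ℂ (LinearMap.ker ((ContinuousLinearMap.adjoint (T - lam • (1 : H →L[ℂ] H)) : H →L[ℂ] H) : H →ₗ[ℂ] H))) ∧
    {lam : ℂ | ¬ (IsClosed (Set.range (T - lam • (1 : H →L[ℂ] H))) ∧
        FiniteDimensional ℂ (LinearMap.ker ((T - lam • (1 : H →L[ℂ] H) : H →L[ℂ] H) : H →ₗ[ℂ] H)) ∧
        FiniteDimensional ℂ (LinearMap.ker ((ContinuousLinearMap.adjoint (T - lam • (1 : H →L[ℂ] H)) : H →L[ℂ] H) : H →ₗ[ℂ] H)))} =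
      {lam : ℂ | ¬ (IsClosed (Set.range (T - lam • (1 : H →L[ℂ] H))) ∧
        (FiniteDimensional ℂ (LinearMap.ker ((T - lam • (1 : H →L[ℂ] H) : H →L[ℂ] H) : H →ₗ[ℂ] H)) ∨
          FiniteDimensional ℂ (LinearMap.ker ((ContinuousLinearMap.adjoint (T - lam • (1 : H →L[ℂ] H)) : H →L[ℂ] H) : H →ₗ[ℂ] H))))} := by
  obtain ⟨hadd, hsmul, hinv, _hinner⟩ := hC
  -- the key fact for each lam
  have key : ∀ lam : ℂ,
      (FiniteDimensional ℂ (LinearMap.ker ((T - lam • (1 : H →L[ℂ] H) : H →L[ℂ] H) : H →ₗ[ℂ] H)) ↔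
        FiniteDimensional ℂ (LinearMap.ker ((ContinuousLinearMap.adjoint (T - lam • (1 : H →L[ℂ] H)) : H →L[ℂ] H) : H →ₗ[ℂ] H))) ∧
      Module.finrank ℂ (LinearMap.ker ((T - lam • (1 : H →L[ℂ] H) : H →L[ℂ] H) : H →ₗ[ℂ] H)) =
        Module.finrank ℂ (LinearMap.ker ((ContinuousLinearMap.adjoint (T - lam • (1 : H →L[ℂ] H)) : H →L[ℂ] H) : H →ₗ[ℂ] H)) := by
    intro lam
    apply ker_equiv_aux C hadd hsmul hinv
    intro x
    have hneg : ∀ y : H, C (-y) = -C y := by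
      intro y
      have := hsmul (-1) y
      simpa using this
    have hsub : ∀ y z : H, C (y - z) = C y - C z := by
      intro y z
      rw [sub_eq_add_neg, hadd, hneg, sub_eq_add_neg]
    have lhs : C ((T - lam • (1 : H →L[ℂ] H)) (C x))
        = ContinuousLinearMap.adjoint T x - (starRingEnd ℂ) lam • x := by
      have : (T - lam • (1 : H →L[ℂ] H)) (C x) = T (C x) - lam • C x := by
        simp
      rw [this, hsub, hT, hsmul, hinv]
    have rhs : ContinuousLinearMap.adjoint (T - lam • (1 : H →L[ℂ] H)) x
        = ContinuousLinearMap.adjoint T x - (starRingEnd ℂ) lam • x := by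
      simp [map_sub, map_smulₛₗ, ContinuousLinearMap.one_def, ContinuousLinearMap.adjoint_id]
    rw [lhs, rhs]
  constructor
  · intro lam ⟨_hcl, hfin⟩
    obtain ⟨hiff, hrank⟩ := key lam
    rcases hfin with h | h
    · exact ⟨h, hiff.mp h, hrank⟩
    · exact ⟨hiff.mpr h, h, hrank⟩
  · ext lam
    obtain ⟨hiff, _⟩ := key lam
    simp only [Set.mem_setOf_eq, not_iff_not]
    constructor
    · rintro ⟨hcl, h1, h2⟩
      exact ⟨hcl, Or.inl h1⟩
    · rintro ⟨hcl, h | h⟩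
      · exact ⟨hcl, h, hiff.mp h⟩
      · exact ⟨hcl, hiff.mpr h, h⟩
end
end

section
/- Let A be a bounded operator on a complex Hilbert space K such that the C*-algebra generated by A and the identity contains no nonzero compact operator, and let B = A^(∞) be the direct sum of countably infinitely many copies of A. If B − λ is Fredholm of index 0 for some λ ∈ ℂ, then A − λ is invertible, and hence B − λ is invertible. Consequently, if R is any operator approximately unitarily equivalent to B, then σ(R) = σ_e(R). -/
noncomputable section

section HilbertAux

set_option linter.unusedSectionVars false
set_option linter.unnecessarySimpa false
set_option maxHeartbeats 1000000

variable {E : Type*} [NormedAddCommGroup E] [InnerProductSpace ℂ E] [CompleteSpace E]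

lemma aux_isUnit_of_bijective (T : E →L[ℂ] E) (hT : Function.Bijective T) : IsUnit T := by
  have h1 : T.ker = ⊥ := LinearMap.ker_eq_bot.mpr hT.1
  have h2 : T.range = ⊤ := LinearMap.range_eq_top.mpr hT.2
  refine ⟨⟨T, ((ContinuousLinearEquiv.ofBijective T h1 h2).symm : E →L[ℂ] E), ?_, ?_⟩, rfl⟩
  · ext x
    have := (ContinuousLinearEquiv.ofBijective T h1 h2).apply_symm_apply x
    simpa [ContinuousLinearMap.mul_apply] using this
  · ext x
    have := (ContinuousLinearEquiv.ofBijective T h1 h2).symm_apply_apply x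
    simpa [ContinuousLinearMap.mul_apply] using this

lemma aux_unitary_inner_map {u : E →L[ℂ] E} (hu : u ∈ unitary (E →L[ℂ] E)) (x y : E) :
    (inner ℂ (u x) (u y) : ℂ) = inner ℂ x y := by
  have h1 : ContinuousLinearMap.adjoint u (u x) = x := by
    have h := congrArg (fun (T : E →L[ℂ] E) => T x) (Unitary.mem_iff.mp hu).1
    simpa [ContinuousLinearMap.mul_apply, ContinuousLinearMap.star_eq_adjoint] using h
  have h2 := ContinuousLinearMap.adjoint_inner_left u y (u x)
  rw [h1] at h2
  exact h2.symm

lemma aux_unitary_norm_map {u : E →L[ℂ] E} (hu : u ∈ unitary (E →L[ℂ] E)) (x : E) :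
    ‖u x‖ = ‖x‖ := by
  rw [norm_eq_sqrt_re_inner (𝕜 := ℂ), norm_eq_sqrt_re_inner (𝕜 := ℂ) x, aux_unitary_inner_map hu]

lemma aux_unitary_norm_le_one {u : E →L[ℂ] E} (hu : u ∈ unitary (E →L[ℂ] E)) : ‖u‖ ≤ 1 :=
  ContinuousLinearMap.opNorm_le_bound u zero_le_one fun x => by
    rw [aux_unitary_norm_map hu x, one_mul]

lemma aux_unitary_orthonormal {u : E →L[ℂ] E} (hu : u ∈ unitary (E →L[ℂ] E)) {g : ℕ → E}
    (hg : Orthonormal ℂ g) : Orthonormal ℂ (fun j => u (g j)) := by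
  rw [orthonormal_iff_ite] at hg ⊢
  intro i j
  rw [aux_unitary_inner_map hu]
  exact hg i j

lemma aux_dichotomy (T : E →L[ℂ] E) (h : ¬ IsUnit T) :
    (∀ ε : ℝ, 0 < ε → ∃ x : E, ‖x‖ = 1 ∧ ‖T x‖ ≤ ε) ∨
    (∃ y : E, ‖y‖ = 1 ∧ ContinuousLinearMap.adjoint T y = 0) := by
  by_cases hbb : ∃ c : ℝ, 0 < c ∧ ∀ x, c * ‖x‖ ≤ ‖T x‖
  · right
    by_contra hy
    push_neg at hy
    obtain ⟨c, hc, hcb⟩ := hbb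
    have hker : ∀ z : E, ContinuousLinearMap.adjoint T z = 0 → z = 0 := by
      intro z hz
      by_contra hz0
      have hn : (0:ℝ) < ‖z‖ := norm_pos_iff.mpr hz0
      refine hy (((‖z‖ : ℂ))⁻¹ • z) ?_ ?_
      · rw [norm_smul, norm_inv, Complex.norm_real, norm_norm, inv_mul_cancel₀ hn.ne']
      · rw [map_smul, hz, smul_zero]
    have hinj : Function.Injective T := by
      intro a b hab
      have h2 := hcb (a - b)
      rw [map_sub, hab, sub_self, norm_zero] at h2
      have h3 : ‖a - b‖ ≤ 0 := by nlinarith [norm_nonneg (a - b)]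
      exact sub_eq_zero.mp (norm_le_zero_iff.mp h3)
    have hclosed : IsClosed (Set.range T) := by
      have hanti : AntilipschitzWith ⟨c⁻¹, by positivity⟩ ⇑T := by
        apply T.antilipschitz_of_bound
        intro x
        have := hcb x
        change ‖x‖ ≤ c⁻¹ * ‖T x‖
        calc ‖x‖ = c⁻¹ * (c * ‖x‖) := by field_simp
          _ ≤ c⁻¹ * ‖T x‖ := by
              apply mul_le_mul_of_nonneg_left this (by positivity)
      exact hanti.isClosed_range T.uniformContinuous
    have hsurj : Function.Surjective T := by
      have hrange : T.range = ⊤ := ?_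
      · intro z
        exact LinearMap.mem_range.mp (hrange ▸ Submodule.mem_top)
      haveI : CompleteSpace (T.range) := by
        have hcl : IsClosed ((T.range : Submodule ℂ E) : Set E) := by
          have : ((T.range : Submodule ℂ E) : Set E) = Set.range T := by
            ext z; simp [LinearMap.mem_range]
          rw [this]; exact hclosed
        exact hcl.completeSpace_coe
      rw [← Submodule.orthogonal_eq_bot_iff (K := T.range)]
      rw [Submodule.eq_bot_iff]
      intro z hzmem
      have hadj : ContinuousLinearMap.adjoint T z = 0 := by
        have hall : ∀ w : E, (inner ℂ (ContinuousLinearMap.adjoint T z) w : ℂ) = 0 := by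
          intro w
          rw [ContinuousLinearMap.adjoint_inner_left]
          have := (Submodule.mem_orthogonal _ z).mp hzmem (T w) (LinearMap.mem_range_self _ w)
          rw [← inner_conj_symm, this, map_zero]
        have := hall (ContinuousLinearMap.adjoint T z)
        exact inner_self_eq_zero.mp this
      exact hker z hadj
    exact (h (aux_isUnit_of_bijective T ⟨hinj, hsurj⟩)).elim
  · left
    intro ε hε
    push_neg at hbb
    obtain ⟨x, hx⟩ := hbb ε hε
    have hx0 : x ≠ 0 := by
      rintro rfl
      simp at hx
    have hn : (0:ℝ) < ‖x‖ := norm_pos_iff.mpr hx0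
    refine ⟨((‖x‖ : ℂ))⁻¹ • x, ?_, ?_⟩
    · rw [norm_smul, norm_inv, Complex.norm_real, norm_norm, inv_mul_cancel₀ hn.ne']
    · rw [map_smul, norm_smul, norm_inv, Complex.norm_real, norm_norm]
      calc ‖x‖⁻¹ * ‖T x‖ ≤ ‖x‖⁻¹ * (ε * ‖x‖) := by
            apply mul_le_mul_of_nonneg_left hx.le (by positivity)
        _ = ε := by field_simp

lemma aux_bounded_below (S : E →L[ℂ] E) (hcl : IsClosed (Set.range S)) :
    ∃ c : ℝ, 0 < c ∧ ∀ x ∈ (S.ker)ᗮ, c * ‖x‖ ≤ ‖S x‖ := by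
  haveI hker_cs : CompleteSpace (S.ker) := by
    have : IsClosed ((S.ker : Submodule ℂ E) : Set E) := ContinuousLinearMap.isClosed_ker S
    exact this.completeSpace_coe
  set p : Submodule ℂ E := (S.ker)ᗮ with hp
  haveI : CompleteSpace p := (Submodule.isClosed_orthogonal _).completeSpace_coe
  set rng : Submodule ℂ E := S.range with hrng
  have hrngcl : IsClosed ((rng : Submodule ℂ E) : Set E) := by
    have : ((rng : Submodule ℂ E) : Set E) = Set.range S := by
      ext z; simp [LinearMap.mem_range, hrng]
    rw [this]; exact hcl
  haveI : CompleteSpace rng := hrngcl.completeSpace_coe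
  set F : p →L[ℂ] rng := (S.comp p.subtypeL).codRestrict rng
    (fun x => LinearMap.mem_range_self _ _) with hF
  have hFap : ∀ x : p, (F x : E) = S (x : E) := fun x => rfl
  have hFinj : F.ker = ⊥ := by
    rw [Submodule.eq_bot_iff]
    intro x hx
    have hx' : S (x : E) = 0 := by
      have : (F x : E) = 0 := by
        rw [LinearMap.mem_ker, ContinuousLinearMap.coe_coe] at hx
        rw [hx]; rfl
      rw [← hFap]; exact this
    have hxker : (x : E) ∈ S.ker := LinearMap.mem_ker.mpr hx'
    have h0 : (inner ℂ ((x : E)) ((x : E)) : ℂ) = 0 :=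
      (Submodule.mem_orthogonal _ _).mp x.2 (x : E) hxker
    exact Subtype.ext (inner_self_eq_zero.mp h0)
  have hFsurj : F.range = ⊤ := by
    rw [Submodule.eq_top_iff']
    rintro ⟨y, hy⟩
    obtain ⟨w, hw⟩ := LinearMap.mem_range.mp hy
    rw [ContinuousLinearMap.coe_coe] at hw
    refine LinearMap.mem_range.mpr ⟨⟨w - (Submodule.orthogonalProjection (S.ker) w : E),
      Submodule.sub_starProjection_mem_orthogonal (K := S.ker) w⟩, ?_⟩
    apply Subtype.ext
    rw [ContinuousLinearMap.coe_coe, hFap]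
    have hkerm : S ((Submodule.orthogonalProjection (S.ker) w : E)) = 0 :=
      LinearMap.mem_ker.mp (Submodule.orthogonalProjection (S.ker) w).2
    simp only [map_sub, hkerm, sub_zero, hw]
  set e := ContinuousLinearEquiv.ofBijective F hFinj hFsurj with he
  set M : ℝ := ‖(e.symm : rng →L[ℂ] p)‖ with hM
  have hMpos : (0:ℝ) < M + 1 := by positivity
  refine ⟨(M + 1)⁻¹, by positivity, ?_⟩
  intro x hx
  have h1 : ‖x‖ ≤ (M + 1) * ‖S x‖ := by
    have h2 : (⟨x, hx⟩ : p) = e.symm (e ⟨x, hx⟩) := (e.symm_apply_apply _).symm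
    have h3 : ‖(⟨x, hx⟩ : p)‖ = ‖x‖ := rfl
    have h4 : ‖e (⟨x, hx⟩ : p)‖ = ‖S x‖ := by
      have hco : ⇑e = ⇑F := ContinuousLinearEquiv.coeFn_ofBijective F hFinj hFsurj
      have hval : (e (⟨x, hx⟩ : p) : E) = S x := by rw [hco, hFap]
      rw [show ‖e (⟨x, hx⟩ : p)‖ = ‖(e (⟨x, hx⟩ : p) : E)‖ from rfl, hval]
    calc ‖x‖ = ‖e.symm (e ⟨x, hx⟩)‖ := by rw [← h2, h3]
      _ = ‖(e.symm : rng →L[ℂ] p) (e ⟨x, hx⟩)‖ := rfl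
      _ ≤ M * ‖e ⟨x, hx⟩‖ := (e.symm : rng →L[ℂ] p).le_opNorm _
      _ = M * ‖S x‖ := by rw [h4]
      _ ≤ (M + 1) * ‖S x‖ := by nlinarith [norm_nonneg (S x), norm_nonneg ((e.symm : rng →L[ℂ] p))]
  calc (M + 1)⁻¹ * ‖x‖ ≤ (M + 1)⁻¹ * ((M + 1) * ‖S x‖) :=
        mul_le_mul_of_nonneg_left h1 (by positivity)
    _ = ‖S x‖ := by field_simp
lemma aux_combo (S : E →L[ℂ] E) {g : ℕ → E} (hg : Orthonormal ℂ g)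
    (p : Submodule ℂ E) [FiniteDimensional ℂ p] {ε : ℝ}
    (hSg : ∀ j, ‖S (g j)‖ ≤ ε) :
    ∃ x : E, x ∈ pᗮ ∧ x ≠ 0 ∧
      ‖S x‖ ≤ ((Module.finrank ℂ p : ℝ) + 1) * ε * ‖x‖ := by
  haveI : CompleteSpace p := FiniteDimensional.complete ℂ p
  set m := Module.finrank ℂ p with hm
  set L : (Fin (m+1) → ℂ) →ₗ[ℂ] p :=
    { toFun := fun a => Submodule.orthogonalProjection p (∑ i, a i • g i)
      map_add' := by
        intro a b
        rw [← map_add]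
        congr 1
        simp [add_smul, Finset.sum_add_distrib]
      map_smul' := by
        intro c a
        rw [RingHom.id_apply, ← map_smul]
        congr 1
        simp [Finset.smul_sum, smul_smul] } with hL
  have hnotinj : ¬ Function.Injective L := by
    intro hinj
    have hle := LinearMap.finrank_le_finrank_of_injective hinj
    rw [Module.finrank_fin_fun] at hle
    omega
  rw [Function.not_injective_iff] at hnotinj
  obtain ⟨a, b, hab, hne⟩ := hnotinj
  set d : Fin (m+1) → ℂ := a - b with hd
  have hd0 : d ≠ 0 := sub_ne_zero.mpr hne
  have hLd : Submodule.orthogonalProjection p (∑ i, d i • g i) = 0 := by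
    have hLd' : L d = 0 := by rw [hd, map_sub, hab, sub_self]
    exact hLd'
  set x := ∑ i : Fin (m+1), d i • g i with hx
  have horth' : Orthonormal ℂ (fun i : Fin (m+1) => g (i : ℕ)) :=
    hg.comp _ Fin.val_injective
  have hxmem : x ∈ pᗮ := Submodule.orthogonalProjectionOnto_eq_zero_iff.mp hLd
  have hxne : x ≠ 0 := by
    intro h0
    apply hd0
    funext i
    exact Fintype.linearIndependent_iff.mp horth'.linearIndependent d h0 i
  have hcoef : ∀ i : Fin (m+1), ‖d i‖ ≤ ‖x‖ := by
    intro i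
    have h1 : (inner ℂ (g (i : ℕ)) x : ℂ) = d i := horth'.inner_right_fintype d i
    calc ‖d i‖ = ‖(inner ℂ (g (i : ℕ)) x : ℂ)‖ := by rw [h1]
      _ ≤ ‖g (i : ℕ)‖ * ‖x‖ := norm_inner_le_norm _ _
      _ = ‖x‖ := by rw [horth'.1 i, one_mul]
  refine ⟨x, hxmem, hxne, ?_⟩
  have hε0 : 0 ≤ ε := le_trans (norm_nonneg _) (hSg 0)
  have hbound : ‖S x‖ ≤ ∑ i : Fin (m+1), ‖d i‖ * ‖S (g (i : ℕ))‖ := by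
    rw [hx, map_sum]
    refine (norm_sum_le _ _).trans ?_
    refine Finset.sum_le_sum fun i _ => ?_
    rw [map_smul, norm_smul]
  have hstep : ∑ i : Fin (m+1), ‖d i‖ * ‖S (g (i : ℕ))‖ ≤ ∑ _i : Fin (m+1), ‖x‖ * ε :=
    Finset.sum_le_sum fun i _ =>
      mul_le_mul (hcoef i) (hSg i) (norm_nonneg _) (norm_nonneg _)
  have hconst : ∑ _i : Fin (m+1), ‖x‖ * ε = ((m : ℝ) + 1) * (‖x‖ * ε) := by
    rw [Finset.sum_const, Finset.card_univ, Fintype.card_fin, nsmul_eq_mul]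
    push_cast
    ring
  calc ‖S x‖ ≤ ∑ i : Fin (m+1), ‖d i‖ * ‖S (g (i : ℕ))‖ := hbound
    _ ≤ ((m : ℝ) + 1) * (‖x‖ * ε) := by rw [← hconst]; exact hstep
    _ = ((m : ℝ) + 1) * ε * ‖x‖ := by ring

lemma aux_eps (S : E →L[ℂ] E) (hcl : IsClosed (Set.range S))
    [FiniteDimensional ℂ (S.ker)] :
    ∃ ε : ℝ, 0 < ε ∧ ∀ g : ℕ → E, Orthonormal ℂ g → ∃ j, ε < ‖S (g j)‖ := by
  obtain ⟨c, hc, hbb⟩ := aux_bounded_below S hcl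
  set m := Module.finrank ℂ (S.ker) with hm
  refine ⟨c / (2 * ((m : ℝ) + 1)), by positivity, ?_⟩
  intro g hg
  by_contra hcon
  push_neg at hcon
  obtain ⟨x, hxmem, hxne, hxb⟩ := aux_combo S hg (S.ker) hcon
  have h1 := hbb x hxmem
  have hxpos : 0 < ‖x‖ := norm_pos_iff.mpr hxne
  have heq : ((m : ℝ) + 1) * (c / (2 * ((m : ℝ) + 1))) = c / 2 := by
    have : ((m : ℝ) + 1) ≠ 0 := by positivity
    field_simp
  rw [heq] at hxb
  nlinarith

lemma aux_eps_adj (S : E →L[ℂ] E) (hcl : IsClosed (Set.range S))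
    [FiniteDimensional ℂ ((ContinuousLinearMap.adjoint S).ker)] :
    ∃ ε : ℝ, 0 < ε ∧ ∀ g : ℕ → E, Orthonormal ℂ g →
      ∃ j, ε < ‖ContinuousLinearMap.adjoint S (g j)‖ := by
  obtain ⟨c, hc, hbb⟩ := aux_bounded_below S hcl
  set S' := ContinuousLinearMap.adjoint S with hS'
  set m := Module.finrank ℂ (S'.ker) with hm
  refine ⟨c / (2 * ((m : ℝ) + 1)), by positivity, ?_⟩
  intro g hg
  by_contra hcon
  push_neg at hcon
  obtain ⟨x, hxmem, hxne, hxb⟩ := aux_combo S' hg (S'.ker) hcon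
  have heq : ((m : ℝ) + 1) * (c / (2 * ((m : ℝ) + 1))) = c / 2 := by
    have : ((m : ℝ) + 1) ≠ 0 := by positivity
    field_simp
  rw [heq] at hxb
  -- (ker S')ᗮ = range S
  have hker_eq : S'.ker = (S.range)ᗮ := by
    ext z
    constructor
    · intro hz
      rw [Submodule.mem_orthogonal]
      intro u hu
      obtain ⟨w, rfl⟩ := LinearMap.mem_range.mp hu
      have h2 : (inner ℂ (S' z) w : ℂ) = inner ℂ z (S w) :=
        ContinuousLinearMap.adjoint_inner_left S w z
      rw [show S' z = 0 from LinearMap.mem_ker.mp hz, inner_zero_left] at h2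
      rw [ContinuousLinearMap.coe_coe, ← inner_conj_symm, ← h2, map_zero]
    · intro hz
      rw [LinearMap.mem_ker]
      have hall : ∀ w : E, (inner ℂ (S' z) w : ℂ) = 0 := by
        intro w
        have h2 : (inner ℂ (S' z) w : ℂ) = inner ℂ z (S w) :=
          ContinuousLinearMap.adjoint_inner_left S w z
        have h3 := (Submodule.mem_orthogonal _ z).mp hz (S w) (LinearMap.mem_range_self _ w)
        rw [h2, ← inner_conj_symm, h3, map_zero]
      exact inner_self_eq_zero.mp (hall (S' z))
  have hrng_cs : CompleteSpace (S.range) := by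
    have : ((S.range : Submodule ℂ E) : Set E) = Set.range S := by
      ext z; simp [LinearMap.mem_range]
    exact (this ▸ hcl : IsClosed ((S.range : Submodule ℂ E) : Set E)).completeSpace_coe
  have horth_eq : (S'.ker)ᗮ = S.range := by
    rw [hker_eq, Submodule.orthogonal_orthogonal]
  rw [horth_eq] at hxmem
  obtain ⟨w, hw⟩ := LinearMap.mem_range.mp hxmem
  rw [ContinuousLinearMap.coe_coe] at hw
  haveI : CompleteSpace (S.ker) :=
    (ContinuousLinearMap.isClosed_ker S).completeSpace_coe
  set w' := w - (Submodule.orthogonalProjection (S.ker) w : E) with hw'def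
  have hw'mem : w' ∈ (S.ker)ᗮ := Submodule.sub_starProjection_mem_orthogonal (K := S.ker) w
  have hSw' : S w' = x := by
    rw [hw'def, map_sub, show S _ = 0 from LinearMap.mem_ker.mp (Submodule.orthogonalProjection (S.ker) w).2,
      sub_zero, hw]
  have hbw : c * ‖w'‖ ≤ ‖x‖ := by
    rw [← hSw']; exact hbb w' hw'mem
  have hxpos : 0 < ‖x‖ := norm_pos_iff.mpr hxne
  have key : ‖x‖ * ‖x‖ ≤ ‖S' x‖ * ‖w'‖ := by
    have h2 : (inner ℂ (S' x) w' : ℂ) = inner ℂ x (S w') :=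
      ContinuousLinearMap.adjoint_inner_left S w' x
    rw [hSw'] at h2
    calc ‖x‖ * ‖x‖ = ‖(inner ℂ x x : ℂ)‖ := by
          rw [inner_self_eq_norm_sq_to_K, norm_pow, RCLike.norm_ofReal, abs_norm, sq]
      _ = ‖(inner ℂ (S' x) w' : ℂ)‖ := by rw [h2]
      _ ≤ ‖S' x‖ * ‖w'‖ := norm_inner_le_norm _ _
  have hwle : ‖w'‖ ≤ ‖x‖ / c := by
    rw [le_div_iff₀ hc]
    linarith
  have h3 : ‖S' x‖ * ‖w'‖ ≤ (c / 2 * ‖x‖) * (‖x‖ / c) :=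
    mul_le_mul hxb hwle (norm_nonneg _) (by positivity)
  have h4 : (c / 2 * ‖x‖) * (‖x‖ / c) = ‖x‖ * ‖x‖ / 2 := by
    field_simp
  nlinarith
end HilbertAux
section LpAux

set_option linter.unusedSectionVars false
set_option maxHeartbeats 1000000

variable {K : Type*} [NormedAddCommGroup K] [InnerProductSpace ℂ K] [CompleteSpace K]

local notation "ℋ" => lp (fun _ : ℕ => K) 2

lemma lp_two_pos : (0:ℝ) < (2 : ENNReal).toReal := by norm_num

lemma lp_norm_single (n : ℕ) (x : K) : ‖(lp.single 2 n x : ℋ)‖ = ‖x‖ :=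
  lp.norm_single (E := fun _ : ℕ => K) (p := 2) (by norm_num : (0 : ENNReal) < 2) n x

lemma lp_single_zero (n : ℕ) : (lp.single 2 n (0 : K) : ℋ) = 0 := by
  apply lp.ext
  funext j
  by_cases h : j = n
  · subst h; rw [lp.single_apply_self]; rfl
  · rw [lp.single_apply_ne _ _ _ h]; rfl

lemma lp_orthonormal_single (x : ℕ → K) (hx : ∀ j, ‖x j‖ = 1) :
    Orthonormal ℂ (fun j => (lp.single 2 j (x j) : ℋ)) := by
  rw [orthonormal_iff_ite]
  intro i j
  rw [lp.inner_single_left]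
  by_cases h : i = j
  · subst h
    rw [lp.single_apply_self, if_pos rfl, inner_self_eq_norm_sq_to_K, hx i]
    norm_num
  · rw [lp.single_apply_ne _ _ _ h, inner_zero_right, if_neg h]

lemma lp_pw_sub {S : ℋ →L[ℂ] ℋ} {T : K →L[ℂ] K}
    (hS : ∀ (f : ℋ) (n : ℕ), (S f : ∀ _ : ℕ, K) n = T (f n)) (mu : ℂ) :
    ∀ (f : ℋ) (n : ℕ), ((S - mu • 1) f : ∀ _ : ℕ, K) n = (T - mu • 1) (f n) := by
  intro f n
  simp only [ContinuousLinearMap.sub_apply, ContinuousLinearMap.smul_apply,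
    ContinuousLinearMap.one_apply, lp.coeFn_sub, Pi.sub_apply, lp.coeFn_smul, Pi.smul_apply, hS]

lemma lp_single_image {S : ℋ →L[ℂ] ℋ} {T : K →L[ℂ] K}
    (hS : ∀ (f : ℋ) (n : ℕ), (S f : ∀ _ : ℕ, K) n = T (f n)) (n : ℕ) (x : K) :
    S (lp.single 2 n x) = lp.single 2 n (T x) := by
  apply lp.ext
  funext j
  rw [hS]
  by_cases h : j = n
  · subst h; rw [lp.single_apply_self, lp.single_apply_self]
  · rw [lp.single_apply_ne _ _ _ h, lp.single_apply_ne _ _ _ h, map_zero]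

lemma lp_adjoint_single {S : ℋ →L[ℂ] ℋ} {T : K →L[ℂ] K}
    (hS : ∀ (f : ℋ) (n : ℕ), (S f : ∀ _ : ℕ, K) n = T (f n)) (n : ℕ) (y : K) :
    ContinuousLinearMap.adjoint S (lp.single 2 n y) =
      lp.single 2 n (ContinuousLinearMap.adjoint T y) := by
  apply ext_inner_right ℂ
  intro v
  rw [ContinuousLinearMap.adjoint_inner_left, lp.inner_single_left, lp.inner_single_left,
    ContinuousLinearMap.adjoint_inner_left, hS]

lemma lp_isUnit {S : ℋ →L[ℂ] ℋ} {T : K →L[ℂ] K}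
    (hS : ∀ (f : ℋ) (n : ℕ), (S f : ∀ _ : ℕ, K) n = T (f n)) (hT : IsUnit T) : IsUnit S := by
  obtain ⟨u, hu⟩ := hT
  have hCT : ∀ z : K, (↑u⁻¹ : K →L[ℂ] K) (T z) = z := by
    intro z
    have h1 : ((↑u⁻¹ : K →L[ℂ] K) * T) = 1 := by rw [← hu, Units.inv_mul]
    have := congrArg (fun (W : K →L[ℂ] K) => W z) h1
    simpa [ContinuousLinearMap.mul_apply] using this
  have hTC : ∀ z : K, T ((↑u⁻¹ : K →L[ℂ] K) z) = z := by
    intro z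
    have h1 : (T * (↑u⁻¹ : K →L[ℂ] K)) = 1 := by rw [← hu, Units.mul_inv]
    have := congrArg (fun (W : K →L[ℂ] K) => W z) h1
    simpa [ContinuousLinearMap.mul_apply] using this
  apply aux_isUnit_of_bijective
  constructor
  · intro f g hfg
    apply lp.ext
    funext n
    have h2 := congrArg (fun (h : ℋ) => (h : ∀ _ : ℕ, K) n) hfg
    simp only [hS] at h2
    have := congrArg (↑u⁻¹ : K →L[ℂ] K) h2
    rwa [hCT, hCT] at this
  · intro g2
    have hmem : Memℓp (fun n => (↑u⁻¹ : K →L[ℂ] K) (g2 n)) 2 := by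
      apply memℓp_gen
      have hg2 := lp.memℓp g2
      rw [memℓp_gen_iff lp_two_pos] at hg2
      refine Summable.of_nonneg_of_le (fun n => by positivity) (fun n => ?_)
        (hg2.mul_left (‖(↑u⁻¹ : K →L[ℂ] K)‖ ^ (2 : ENNReal).toReal))
      calc ‖(↑u⁻¹ : K →L[ℂ] K) (g2 n)‖ ^ (2 : ENNReal).toReal
          ≤ (‖(↑u⁻¹ : K →L[ℂ] K)‖ * ‖(g2 : ∀ _ : ℕ, K) n‖) ^ (2 : ENNReal).toReal :=
            Real.rpow_le_rpow (norm_nonneg _) (ContinuousLinearMap.le_opNorm _ _) lp_two_pos.le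
        _ = ‖(↑u⁻¹ : K →L[ℂ] K)‖ ^ (2 : ENNReal).toReal * ‖(g2 : ∀ _ : ℕ, K) n‖ ^ (2 : ENNReal).toReal :=
            Real.mul_rpow (norm_nonneg _) (norm_nonneg _)
    refine ⟨⟨fun n => (↑u⁻¹ : K →L[ℂ] K) (g2 n), hmem⟩, ?_⟩
    apply lp.ext
    funext n
    rw [hS]
    exact hTC (g2 n)

lemma lp_main1 {S : ℋ →L[ℂ] ℋ} {T : K →L[ℂ] K}
    (hS : ∀ (f : ℋ) (n : ℕ), (S f : ∀ _ : ℕ, K) n = T (f n))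
    (hcl : IsClosed (Set.range S))
    (hk1 : FiniteDimensional ℂ (S.ker))
    (hk2 : FiniteDimensional ℂ ((ContinuousLinearMap.adjoint S).ker)) :
    IsUnit T := by
  by_contra hT
  rcases aux_dichotomy T hT with hleft | ⟨y, hy1, hy2⟩
  · haveI := hk1
    obtain ⟨ε, hε, hL⟩ := aux_eps S hcl
    obtain ⟨x, hx1, hx2⟩ := hleft (ε / 2) (by positivity)
    obtain ⟨j, hj⟩ := hL _ (lp_orthonormal_single (fun _ => x) (fun _ => hx1))
    rw [lp_single_image hS, lp_norm_single] at hj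
    linarith
  · have hmem : ∀ j : ℕ, (lp.single 2 j y : ℋ) ∈
        (ContinuousLinearMap.adjoint S).ker := by
      intro j
      rw [LinearMap.mem_ker, ContinuousLinearMap.coe_coe, lp_adjoint_single hS, hy2, lp_single_zero]
    haveI := hk2
    have horth := lp_orthonormal_single (fun _ => y) (fun _ => hy1)
    have hli : LinearIndependent ℂ
        (fun j : ℕ => (⟨lp.single 2 j y, hmem j⟩ :
          (ContinuousLinearMap.adjoint S).ker)) := by
      apply LinearIndependent.of_comp
        ((ContinuousLinearMap.adjoint S).ker).subtype
      exact horth.linearIndependent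
    exact Module.Finite.not_linearIndependent_of_infinite _ hli

lemma lp_main2 {A : K →L[ℂ] K} {B R : ℋ →L[ℂ] ℋ}
    (hB : ∀ (f : ℋ) (n : ℕ), (B f : ∀ _ : ℕ, K) n = A (f n))
    {U : ℕ → (ℋ →L[ℂ] ℋ)} (hU : ∀ n, U n ∈ unitary (ℋ →L[ℂ] ℋ))
    (htend : Filter.Tendsto (fun n => ‖U n * B - R * U n‖) Filter.atTop (nhds 0))
    (mu : ℂ)
    (hcl : IsClosed (Set.range (R - mu • (1 : ℋ →L[ℂ] ℋ))))
    (hk1 : FiniteDimensional ℂ ((R - mu • (1 : ℋ →L[ℂ] ℋ)).ker))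
    (hk2 : FiniteDimensional ℂ
      ((ContinuousLinearMap.adjoint (R - mu • (1 : ℋ →L[ℂ] ℋ))).ker)) :
    IsUnit (A - mu • (1 : K →L[ℂ] K)) := by
  set S : ℋ →L[ℂ] ℋ := R - mu • (1 : ℋ →L[ℂ] ℋ) with hSdef
  set T : K →L[ℂ] K := A - mu • (1 : K →L[ℂ] K) with hTdef
  set V : ℋ →L[ℂ] ℋ := B - mu • (1 : ℋ →L[ℂ] ℋ) with hVdef
  have hV : ∀ (f : ℋ) (n : ℕ), (V f : ∀ _ : ℕ, K) n = T (f n) := lp_pw_sub hB mu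
  have halg : ∀ n, S * U n - U n * V = R * U n - U n * B := by
    intro n
    simp only [hSdef, hVdef, sub_mul, mul_sub, smul_mul_assoc, mul_smul_comm, one_mul, mul_one]
    abel
  have hnorm : ∀ n, ‖S * U n - U n * V‖ = ‖U n * B - R * U n‖ := fun n => by
    rw [halg n, norm_sub_rev]
  by_contra hT
  rcases aux_dichotomy T hT with hleft | ⟨y, hy1, hy2⟩
  · haveI := hk1
    obtain ⟨ε, hε, hL⟩ := aux_eps S hcl
    obtain ⟨x, hx1, hx2⟩ := hleft (ε / 2) (by positivity)
    obtain ⟨n, hn⟩ := (htend.eventually (gt_mem_nhds (by positivity : (0:ℝ) < ε / 2))).exists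
    have horth := aux_unitary_orthonormal (hU n)
      (lp_orthonormal_single (fun _ => x) (fun _ => hx1))
    obtain ⟨j, hj⟩ := hL _ horth
    have h0 : S (U n (lp.single 2 j x)) =
        (S * U n - U n * V) (lp.single 2 j x) + U n (V (lp.single 2 j x)) := by
      simp [ContinuousLinearMap.sub_apply, ContinuousLinearMap.mul_apply]
    have hb1 : ‖S (U n (lp.single 2 j x))‖ ≤
        ‖S * U n - U n * V‖ * ‖(lp.single 2 j x : ℋ)‖ + ‖V (lp.single 2 j x)‖ := by
      rw [h0]
      exact (norm_add_le _ _).trans (add_le_add (ContinuousLinearMap.le_opNorm _ _)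
        (le_of_eq (aux_unitary_norm_map (hU n) _)))
    rw [lp_norm_single, hx1, mul_one, lp_single_image hV, lp_norm_single, hnorm n] at hb1
    linarith
  · haveI := hk2
    obtain ⟨ε, hε, hL⟩ := aux_eps_adj S hcl
    obtain ⟨n, hn⟩ := (htend.eventually (gt_mem_nhds hε)).exists
    have horth := aux_unitary_orthonormal (hU n)
      (lp_orthonormal_single (fun _ => y) (fun _ => hy1))
    obtain ⟨j, hj⟩ := hL _ horth
    set u := U n with hu
    set s : ℋ := lp.single 2 j y with hs
    set D : ℋ →L[ℂ] ℋ := S * u - u * V with hD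
    have hDn : ‖D‖ < ε := by rw [hD, hnorm n]; exact hn
    have hust : star u ∈ unitary (ℋ →L[ℂ] ℋ) := Unitary.star_mem (hU n)
    have hsus : star u (u s) = s := by
      have h1 := congrArg (fun (W : ℋ →L[ℂ] ℋ) => W s) (Unitary.mem_iff.mp (hU n)).1
      simpa [ContinuousLinearMap.mul_apply] using h1
    have hVadj : ContinuousLinearMap.adjoint V s = 0 := by
      rw [hs, lp_adjoint_single hV, hy2, lp_single_zero]
    have hstarD : (star D) (u s) = star u (ContinuousLinearMap.adjoint S (u s)) := by
      have h1 : star D = star u * star S - star V * star u := by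
        rw [hD, star_sub, star_mul, star_mul]
      rw [h1]
      simp only [ContinuousLinearMap.sub_apply, ContinuousLinearMap.mul_apply, hsus]
      rw [show star V = ContinuousLinearMap.adjoint V from ContinuousLinearMap.star_eq_adjoint V,
        hVadj,
        show star S = ContinuousLinearMap.adjoint S from ContinuousLinearMap.star_eq_adjoint S,
        sub_zero]
    have hbound : ‖ContinuousLinearMap.adjoint S (u s)‖ ≤ ‖D‖ := by
      have h2 : ‖ContinuousLinearMap.adjoint S (u s)‖ =
          ‖star u (ContinuousLinearMap.adjoint S (u s))‖ :=
        (aux_unitary_norm_map hust _).symm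
      rw [h2, ← hstarD]
      calc ‖(star D) (u s)‖ ≤ ‖star D‖ * ‖u s‖ := ContinuousLinearMap.le_opNorm _ _
        _ = ‖D‖ * 1 := by
            rw [show ‖star D‖ = ‖D‖ from norm_star D, aux_unitary_norm_map (hU n), hs,
              lp_norm_single, hy1]
        _ = ‖D‖ := mul_one _
    linarith
lemma lp_transfer {B R : ℋ →L[ℂ] ℋ} {U : ℕ → (ℋ →L[ℂ] ℋ)}
    (hU : ∀ n, U n ∈ unitary (ℋ →L[ℂ] ℋ))
    (htend : Filter.Tendsto (fun n => ‖U n * B - R * U n‖) Filter.atTop (nhds 0)) (mu : ℂ)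
    (hBu : IsUnit (B - mu • (1 : ℋ →L[ℂ] ℋ))) : IsUnit (R - mu • (1 : ℋ →L[ℂ] ℋ)) := by
  obtain ⟨v, hv⟩ := hBu
  set C : ℋ →L[ℂ] ℋ := ↑v⁻¹ with hC
  obtain ⟨n, hn⟩ :=
    (htend.eventually (gt_mem_nhds (by positivity : (0:ℝ) < (‖C‖ + 1)⁻¹))).exists
  set u := U n with hu
  have hmem := Unitary.mem_iff.mp (hU n)
  set uu : (ℋ →L[ℂ] ℋ)ˣ := ⟨u, star u, hmem.2, hmem.1⟩ with huu
  set uu' : (ℋ →L[ℂ] ℋ)ˣ := ⟨star u, u, hmem.1, hmem.2⟩ with huu'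
  set w : (ℋ →L[ℂ] ℋ)ˣ := uu * v * uu' with hw
  have hwval : (↑w : ℋ →L[ℂ] ℋ) = u * (B - mu • 1) * star u := by
    rw [hw, Units.val_mul, Units.val_mul, huu, huu', hv]
  have h1 : (↑uu'⁻¹ : ℋ →L[ℂ] ℋ) = u := rfl
  have h2 : (↑uu⁻¹ : ℋ →L[ℂ] ℋ) = star u := rfl
  have hwinv : (↑w⁻¹ : ℋ →L[ℂ] ℋ) = u * C * star u := by
    rw [hw, mul_inv_rev, mul_inv_rev, Units.val_mul, Units.val_mul, h1, h2, hC, mul_assoc]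
  have hnormC : ‖(↑w⁻¹ : ℋ →L[ℂ] ℋ)‖ ≤ ‖C‖ := by
    rw [hwinv]
    have h3 : ‖u‖ ≤ 1 := aux_unitary_norm_le_one (hU n)
    have h4 : ‖star u‖ ≤ 1 := aux_unitary_norm_le_one (Unitary.star_mem (hU n))
    calc ‖u * C * star u‖ ≤ ‖u * C‖ * ‖star u‖ := norm_mul_le _ _
      _ ≤ (‖u‖ * ‖C‖) * ‖star u‖ :=
          mul_le_mul_of_nonneg_right (norm_mul_le u C) (norm_nonneg _)
      _ ≤ (1 * ‖C‖) * 1 := by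
          have h5 : ‖u‖ * ‖C‖ ≤ 1 * ‖C‖ :=
            mul_le_mul_of_nonneg_right h3 (norm_nonneg _)
          have h6 : (0:ℝ) ≤ ‖u‖ * ‖C‖ := by positivity
          nlinarith
      _ = ‖C‖ := by ring
  set Ecorr : ℋ →L[ℂ] ℋ := (R - mu • 1) - ↑w with hE
  have hEnorm : ‖Ecorr‖ < (‖C‖ + 1)⁻¹ := by
    have h8 : (R - mu • (1 : ℋ →L[ℂ] ℋ)) * u - u * (B - mu • 1) = R * u - u * B := by
      simp only [sub_mul, mul_sub, smul_mul_assoc, mul_smul_comm, one_mul, mul_one]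
      abel
    have h7 : Ecorr = (R * u - u * B) * star u := by
      rw [← h8, hE, hwval, sub_mul, mul_assoc ((R : ℋ →L[ℂ] ℋ) - mu • 1) u (star u), hmem.2,
        mul_one]
    rw [h7]
    calc ‖(R * u - u * B) * star u‖ ≤ ‖R * u - u * B‖ * ‖star u‖ := norm_mul_le _ _
      _ ≤ ‖R * u - u * B‖ * 1 :=
          mul_le_mul_of_nonneg_left (aux_unitary_norm_le_one (Unitary.star_mem (hU n)))
            (norm_nonneg _)
      _ = ‖u * B - R * u‖ := by rw [mul_one, norm_sub_rev]
      _ < (‖C‖ + 1)⁻¹ := hn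
  have hsmall : ‖-((↑w⁻¹ : ℋ →L[ℂ] ℋ) * Ecorr)‖ < 1 := by
    rw [norm_neg]
    calc ‖(↑w⁻¹ : ℋ →L[ℂ] ℋ) * Ecorr‖ ≤ ‖(↑w⁻¹ : ℋ →L[ℂ] ℋ)‖ * ‖Ecorr‖ := norm_mul_le _ _
      _ ≤ ‖C‖ * (‖C‖ + 1)⁻¹ := mul_le_mul hnormC hEnorm.le (norm_nonneg _) (norm_nonneg _)
      _ < 1 := by
          rw [← div_eq_mul_inv, div_lt_one (by positivity : (0:ℝ) < ‖C‖ + 1)]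
          linarith [norm_nonneg C]
  have hfact : (R - mu • (1 : ℋ →L[ℂ] ℋ)) = ↑w * (1 - (-((↑w⁻¹ : ℋ →L[ℂ] ℋ) * Ecorr))) := by
    rw [sub_neg_eq_add, mul_add, mul_one, ← mul_assoc, Units.mul_inv, one_mul, hE]
    abel
  rw [hfact]
  exact w.isUnit.mul (Units.oneSub _ hsmall).isUnit

lemma aux_unit_fred {E : Type*} [NormedAddCommGroup E] [InnerProductSpace ℂ E] [CompleteSpace E]
    (T : E →L[ℂ] E) (h : IsUnit T) :
    IsClosed (Set.range T) ∧ FiniteDimensional ℂ (T.ker) ∧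
      FiniteDimensional ℂ ((ContinuousLinearMap.adjoint T).ker) := by
  have hker : ∀ (W : E →L[ℂ] E), IsUnit W → W.ker = ⊥ := by
    intro W hW
    obtain ⟨w, hw⟩ := hW
    refine LinearMap.ker_eq_bot.mpr ?_
    intro a b hab
    have h1 : ((↑w⁻¹ : E →L[ℂ] E) * W) = 1 := by rw [← hw, Units.inv_mul]
    have h2 := congrArg (fun (Y : E →L[ℂ] E) => Y a) h1
    have h3 := congrArg (fun (Y : E →L[ℂ] E) => Y b) h1
    simp only [ContinuousLinearMap.mul_apply, ContinuousLinearMap.one_apply] at h2 h3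
    rw [← h2, ← h3]
    exact congrArg (↑w⁻¹ : E →L[ℂ] E) hab
  refine ⟨?_, ?_, ?_⟩
  · obtain ⟨w, hw⟩ := h
    have hsurj : Function.Surjective T := by
      intro z
      refine ⟨(↑w⁻¹ : E →L[ℂ] E) z, ?_⟩
      have h1 : (T * (↑w⁻¹ : E →L[ℂ] E)) = 1 := by rw [← hw, Units.mul_inv]
      have := congrArg (fun (Y : E →L[ℂ] E) => Y z) h1
      simpa [ContinuousLinearMap.mul_apply] using this
    rw [hsurj.range_eq]
    exact isClosed_univ
  · rw [hker T h]; infer_instance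
  · have hstar := h.star
    rw [ContinuousLinearMap.star_eq_adjoint] at hstar
    rw [hker _ hstar]; infer_instance
end LpAux
theorem stmt_18 {K : Type*} [NormedAddCommGroup K] [InnerProductSpace ℂ K] [CompleteSpace K]
    (A : K →L[ℂ] K)
    (hA : ∀ X ∈ StarAlgebra.adjoin ℂ {A}, IsCompactOperator ⇑X → X = 0)
    (B : lp (fun _ : ℕ => K) 2 →L[ℂ] lp (fun _ : ℕ => K) 2)
    (hB : ∀ (f : lp (fun _ : ℕ => K) 2) (n : ℕ), (B f : ∀ _ : ℕ, K) n = A (f n)) :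
    (∀ lam : ℂ,
      (IsClosed (Set.range (B - lam • (1 : lp (fun _ : ℕ => K) 2 →L[ℂ] lp (fun _ : ℕ => K) 2))) ∧
        FiniteDimensional ℂ (LinearMap.ker
          (↑(B - lam • (1 : lp (fun _ : ℕ => K) 2 →L[ℂ] lp (fun _ : ℕ => K) 2)) :
            lp (fun _ : ℕ => K) 2 →ₗ[ℂ] lp (fun _ : ℕ => K) 2)) ∧
        FiniteDimensional ℂ (LinearMap.ker ((ContinuousLinearMap.adjoint
          (B - lam • (1 : lp (fun _ : ℕ => K) 2 →L[ℂ] lp (fun _ : ℕ => K) 2))) :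
            lp (fun _ : ℕ => K) 2 →ₗ[ℂ] lp (fun _ : ℕ => K) 2)) ∧
        Module.finrank ℂ (LinearMap.ker
            (↑(B - lam • (1 : lp (fun _ : ℕ => K) 2 →L[ℂ] lp (fun _ : ℕ => K) 2)) :
              lp (fun _ : ℕ => K) 2 →ₗ[ℂ] lp (fun _ : ℕ => K) 2)) =
          Module.finrank ℂ (LinearMap.ker ((ContinuousLinearMap.adjoint
            (B - lam • (1 : lp (fun _ : ℕ => K) 2 →L[ℂ] lp (fun _ : ℕ => K) 2))) :
              lp (fun _ : ℕ => K) 2 →ₗ[ℂ] lp (fun _ : ℕ => K) 2))) →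
      IsUnit (A - lam • (1 : K →L[ℂ] K)) ∧
        IsUnit (B - lam • (1 : lp (fun _ : ℕ => K) 2 →L[ℂ] lp (fun _ : ℕ => K) 2))) ∧
    (∀ R : lp (fun _ : ℕ => K) 2 →L[ℂ] lp (fun _ : ℕ => K) 2,
      (∃ U : ℕ → (lp (fun _ : ℕ => K) 2 →L[ℂ] lp (fun _ : ℕ => K) 2),
        (∀ n, U n ∈ unitary (lp (fun _ : ℕ => K) 2 →L[ℂ] lp (fun _ : ℕ => K) 2)) ∧
        Filter.Tendsto (fun n => ‖U n * B - R * U n‖) Filter.atTop (nhds 0)) →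
      spectrum ℂ R =
        {mu : ℂ | ¬ (IsClosed (Set.range
            (R - mu • (1 : lp (fun _ : ℕ => K) 2 →L[ℂ] lp (fun _ : ℕ => K) 2))) ∧
          FiniteDimensional ℂ (LinearMap.ker
            (↑(R - mu • (1 : lp (fun _ : ℕ => K) 2 →L[ℂ] lp (fun _ : ℕ => K) 2)) :
              lp (fun _ : ℕ => K) 2 →ₗ[ℂ] lp (fun _ : ℕ => K) 2)) ∧
          FiniteDimensional ℂ (LinearMap.ker ((ContinuousLinearMap.adjoint
            (R - mu • (1 : lp (fun _ : ℕ => K) 2 →L[ℂ] lp (fun _ : ℕ => K) 2))) :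
              lp (fun _ : ℕ => K) 2 →ₗ[ℂ] lp (fun _ : ℕ => K) 2)))}) := by
  constructor
  · rintro lam ⟨hcl, hk1, hk2, -⟩
    have hTA : IsUnit (A - lam • (1 : K →L[ℂ] K)) := lp_main1 (lp_pw_sub hB lam) hcl hk1 hk2
    exact ⟨hTA, lp_isUnit (lp_pw_sub hB lam) hTA⟩
  · rintro R ⟨U, hU, htend⟩
    ext mu
    simp only [Set.mem_setOf_eq]
    rw [spectrum.mem_iff]
    have hneg : (algebraMap ℂ (lp (fun _ : ℕ => K) 2 →L[ℂ] lp (fun _ : ℕ => K) 2)) mu - R =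
        -(R - mu • 1) := by
      rw [Algebra.algebraMap_eq_smul_one, neg_sub]
    rw [hneg, IsUnit.neg_iff]
    have hmain : IsUnit (R - mu • (1 : lp (fun _ : ℕ => K) 2 →L[ℂ] lp (fun _ : ℕ => K) 2)) ↔
        (IsClosed (Set.range
            (R - mu • (1 : lp (fun _ : ℕ => K) 2 →L[ℂ] lp (fun _ : ℕ => K) 2))) ∧
          FiniteDimensional ℂ (LinearMap.ker
            (↑(R - mu • (1 : lp (fun _ : ℕ => K) 2 →L[ℂ] lp (fun _ : ℕ => K) 2)) :
              lp (fun _ : ℕ => K) 2 →ₗ[ℂ] lp (fun _ : ℕ => K) 2)) ∧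
          FiniteDimensional ℂ (LinearMap.ker ((ContinuousLinearMap.adjoint
            (R - mu • (1 : lp (fun _ : ℕ => K) 2 →L[ℂ] lp (fun _ : ℕ => K) 2))) :
              lp (fun _ : ℕ => K) 2 →ₗ[ℂ] lp (fun _ : ℕ => K) 2))) := by
      constructor
      · exact aux_unit_fred _
      · rintro ⟨hcl, hk1, hk2⟩
        have hTA : IsUnit (A - mu • (1 : K →L[ℂ] K)) :=
          lp_main2 hB hU htend mu hcl hk1 hk2
        exact lp_transfer hU htend mu (lp_isUnit (lp_pw_sub hB mu) hTA)
    exact not_congr hmain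
end
end

section
/- Let C₀ be a conjugation on a finite-dimensional space K₀ and C₁ a conjugation on a Hilbert space K₁. Let A, B, G be bounded operators with A ∈ B(K₁), B ∈ B(K₀), C₀BC₀ = B*, and G : K₀ → K₁ with C₁AC₁ = A. Then the operator W = [[A*, G, 0], [0, B, C₀G*C₁], [0, 0, A]] on K₁ ⊕ K₀ ⊕ K₁ is complex symmetric with respect to the conjugation J(x, y, z) = (C₁z, C₀y, C₁x). -/
noncomputable section

theorem stmt_19 {K₀ K₁ : Type*}
    [NormedAddCommGroup K₀] [InnerProductSpace ℂ K₀] [CompleteSpace K₀]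
    [NormedAddCommGroup K₁] [InnerProductSpace ℂ K₁] [CompleteSpace K₁]
    [FiniteDimensional ℂ K₀]
    (C₀ : K₀ → K₀) (hC₀ : IsConjugation C₀)
    (C₁ : K₁ → K₁) (hC₁ : IsConjugation C₁)
    (A : K₁ →L[ℂ] K₁) (B : K₀ →L[ℂ] K₀) (G : K₀ →L[ℂ] K₁)
    (hB : ∀ y : K₀, C₀ (B (C₀ y)) = ContinuousLinearMap.adjoint B y)
    (hA : ∀ x : K₁, C₁ (A (C₁ x)) = A x)
    (W : WithLp 2 (K₁ × WithLp 2 (K₀ × K₁)) →L[ℂ] WithLp 2 (K₁ × WithLp 2 (K₀ × K₁)))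
    (hW : ∀ (x : K₁) (y : K₀) (z : K₁),
      W ((WithLp.equiv 2 (K₁ × WithLp 2 (K₀ × K₁))).symm
          (x, (WithLp.equiv 2 (K₀ × K₁)).symm (y, z))) =
        (WithLp.equiv 2 (K₁ × WithLp 2 (K₀ × K₁))).symm
          (ContinuousLinearMap.adjoint A x + G y,
            (WithLp.equiv 2 (K₀ × K₁)).symm
              (B y + C₀ (ContinuousLinearMap.adjoint G (C₁ z)), A z)))
    (J : WithLp 2 (K₁ × WithLp 2 (K₀ × K₁)) → WithLp 2 (K₁ × WithLp 2 (K₀ × K₁)))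
    (hJ : ∀ (x : K₁) (y : K₀) (z : K₁),
      J ((WithLp.equiv 2 (K₁ × WithLp 2 (K₀ × K₁))).symm
          (x, (WithLp.equiv 2 (K₀ × K₁)).symm (y, z))) =
        (WithLp.equiv 2 (K₁ × WithLp 2 (K₀ × K₁))).symm
          (C₁ z, (WithLp.equiv 2 (K₀ × K₁)).symm (C₀ y, C₁ x))) :
    IsConjugation J ∧ ∀ u, J (W (J u)) = ContinuousLinearMap.adjoint W u := by
  obtain ⟨hC₀add, hC₀smul, hC₀inv, hC₀inner⟩ := hC₀
  obtain ⟨hC₁add, hC₁smul, hC₁inv, hC₁inner⟩ := hC₁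
  have hJ' : ∀ u : WithLp 2 (K₁ × WithLp 2 (K₀ × K₁)),
      J u = WithLp.toLp 2 (C₁ u.ofLp.2.ofLp.2, WithLp.toLp 2 (C₀ u.ofLp.2.ofLp.1, C₁ u.ofLp.1)) :=
    fun u => hJ u.ofLp.1 u.ofLp.2.ofLp.1 u.ofLp.2.ofLp.2
  have hW' : ∀ u : WithLp 2 (K₁ × WithLp 2 (K₀ × K₁)),
      W u = WithLp.toLp 2 (ContinuousLinearMap.adjoint A u.ofLp.1 + G u.ofLp.2.ofLp.1,
        WithLp.toLp 2 (B u.ofLp.2.ofLp.1 + C₀ (ContinuousLinearMap.adjoint G (C₁ u.ofLp.2.ofLp.2)), A u.ofLp.2.ofLp.2)) :=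
    fun u => hW u.ofLp.1 u.ofLp.2.ofLp.1 u.ofLp.2.ofLp.2
  constructor
  · refine ⟨?_, ?_, ?_, ?_⟩
    · intro u v
      rw [hJ' (u + v), hJ' u, hJ' v]
      exact (WithLp.ext_iff 2).2 (Prod.ext (hC₁add _ _) ((WithLp.ext_iff 2).2 (Prod.ext (hC₀add _ _) (hC₁add _ _))))
    · intro a u
      rw [hJ' (a • u), hJ' u]
      exact (WithLp.ext_iff 2).2 (Prod.ext (hC₁smul _ _) ((WithLp.ext_iff 2).2 (Prod.ext (hC₀smul _ _) (hC₁smul _ _))))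
    · intro u
      rw [hJ' u, hJ' _]
      exact (WithLp.ext_iff 2).2 (Prod.ext (hC₁inv _) ((WithLp.ext_iff 2).2 (Prod.ext (hC₀inv _) (hC₁inv _))))
    · intro u v
      rw [hJ' u, hJ' v]
      simp only [WithLp.prod_inner_apply, WithLp.ofLp_toLp]
      rw [hC₁inner, hC₀inner, hC₁inner]
      ring
  · have key : ∀ u v : WithLp 2 (K₁ × WithLp 2 (K₀ × K₁)),
        (inner ℂ (J (W (J u))) v : ℂ) = inner ℂ u (W v) := by
      intro u v
      rw [hJ' u, hW' _, hJ' _, hW' v]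
      simp only [WithLp.prod_inner_apply, WithLp.ofLp_toLp]
      set x := u.ofLp.1; set y := u.ofLp.2.ofLp.1; set z := u.ofLp.2.ofLp.2
      set a := v.ofLp.1; set b := v.ofLp.2.ofLp.1; set c := v.ofLp.2.ofLp.2
      have t1 : (inner ℂ (C₁ (A (C₁ x))) a : ℂ) = inner ℂ x (ContinuousLinearMap.adjoint A a) := by
        rw [hA, ContinuousLinearMap.adjoint_inner_right]
      have t2 : (inner ℂ (C₀ (B (C₀ y) + C₀ (ContinuousLinearMap.adjoint G (C₁ (C₁ x))))) b : ℂ)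
          = inner ℂ y (B b) + inner ℂ x (G b) := by
        rw [hC₁inv, hC₀add, hB, hC₀inv, inner_add_left,
          ContinuousLinearMap.adjoint_inner_left, ContinuousLinearMap.adjoint_inner_left]
      have t3 : (inner ℂ (C₁ (ContinuousLinearMap.adjoint A (C₁ z) + G (C₀ y))) c : ℂ)
          = inner ℂ y (C₀ (ContinuousLinearMap.adjoint G (C₁ c))) + inner ℂ z (A c) := by
        have g1 : (inner ℂ (C₁ (G (C₀ y))) c : ℂ)
            = inner ℂ y (C₀ (ContinuousLinearMap.adjoint G (C₁ c))) := by
          calc (inner ℂ (C₁ (G (C₀ y))) c : ℂ)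
              = inner ℂ (C₁ (G (C₀ y))) (C₁ (C₁ c)) := by rw [hC₁inv]
            _ = inner ℂ (C₁ c) (G (C₀ y)) := hC₁inner _ _
            _ = inner ℂ (ContinuousLinearMap.adjoint G (C₁ c)) (C₀ y) :=
                (ContinuousLinearMap.adjoint_inner_left G _ _).symm
            _ = inner ℂ (C₀ (C₀ (ContinuousLinearMap.adjoint G (C₁ c)))) (C₀ y) := by
                rw [hC₀inv]
            _ = inner ℂ y (C₀ (ContinuousLinearMap.adjoint G (C₁ c))) := hC₀inner _ _
        have g2 : (inner ℂ (C₁ (ContinuousLinearMap.adjoint A (C₁ z))) c : ℂ)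
            = inner ℂ z (A c) := by
          have hac : A (C₁ c) = C₁ (A c) := by rw [← hA (C₁ c), hC₁inv]
          calc (inner ℂ (C₁ (ContinuousLinearMap.adjoint A (C₁ z))) c : ℂ)
              = inner ℂ (C₁ (ContinuousLinearMap.adjoint A (C₁ z))) (C₁ (C₁ c)) := by rw [hC₁inv]
            _ = inner ℂ (C₁ c) (ContinuousLinearMap.adjoint A (C₁ z)) := hC₁inner _ _
            _ = inner ℂ (A (C₁ c)) (C₁ z) := ContinuousLinearMap.adjoint_inner_right _ _ _
            _ = inner ℂ (C₁ (A c)) (C₁ z) := by rw [hac]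
            _ = inner ℂ z (A c) := hC₁inner _ _
        rw [hC₁add, inner_add_left, g1, g2]; ring
      rw [t1]
      show _ + (_ + _) = _ + (_ + _)
      rw [t2, t3, inner_add_right, inner_add_right]
      ring
    intro u
    apply ext_inner_right ℂ
    intro v
    rw [key, ContinuousLinearMap.adjoint_inner_left]
end
end
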